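/- Let V be a nonzero linear subspace of ℝⁿ, x̄ ∈ V^⟂ with ‖x̄‖ < 1, S₀ = {x̄ + v : v ∈ V, ‖x̄ + v‖ = 1}, and S₁ = {x̄ + v : v ∈ V, ‖x̄ + v‖ ≤ 1}. Then every element y of S₀ satisfies ‖y − x̄‖ = √(1 − ‖x̄‖²), and with γ defined by sin γ = (1 − ‖x̄‖)/√((1 − ‖x̄‖)² + 1 − ‖x̄‖²) ∈ (0,1), the inequality dist(x, S₁) + √(1 − ‖x‖²) ≥ dist(x, S₀)·sin γ holds for all x with ‖x‖ ≤ 1. -/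

import Mathlib

open Matrix

lemma aux_le {a b : ℝ} (ha : 0 ≤ a) (hb : 0 ≤ b) (h : a^2 ≤ b^2) : a ≤ b := by
  nlinarith

lemma E_lem (t a M r : ℝ) (ht0 : 0 ≤ t) (ht1 : t ≤ 1) (ha0 : 0 ≤ a) (ha1 : a ≤ 1)
    (hM : M^2 = 1 - a^2) (hM0 : 0 ≤ M) (hr : r^2 = 1 - t^2) (hr0 : 0 ≤ r) :
    (3-t)*M^2 ≤ (1-a)*((1-t)*a+1+t+2*t^2) + 2*M*r*(1-t) := by
  have hMr0 : 0 ≤ 2*M*r*(1-t) :=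
    mul_nonneg (mul_nonneg (mul_nonneg (by norm_num) hM0) hr0) (by linarith)
  have key : 2*(1-a)*(1+a-t-t^2) ≤ 2*M*r*(1-t) := by
    rcases le_or_gt (1+a-t-t^2) 0 with h | h
    · nlinarith [hMr0, mul_nonneg (sub_nonneg.mpr ha1) (neg_nonneg.mpr h)]
    · have h2t : 0 ≤ 1+a-2*t^2 := by nlinarith [mul_nonneg ht0 (sub_nonneg.mpr ht1)]
      have hW : 0 ≤ 4*(1-a)*((a-t)^2*(1+a-2*t^2)) :=
        mul_nonneg (mul_nonneg (by linarith) (by linarith)) (mul_nonneg (sq_nonneg _) h2t)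
      have hMr2 : M^2*(r^2*(1-t)^2) = (1-a^2)*((1-t^2)*(1-t)^2) := by rw [hM, hr]
      have hsq : (2*(1-a)*(1+a-t-t^2))^2 ≤ (2*M*r*(1-t))^2 := by nlinarith [hW, hMr2]
      exact aux_le (by nlinarith [mul_nonneg (sub_nonneg.mpr ha1) h.le]) hMr0 hsq
  have hM3 : (3-t)*M^2 = (3-t)*(1-a^2) := by rw [hM]
  linarith [key, hM3]

lemma R_poly (t s a r : ℝ) (ht0 : 0 ≤ t) (ht1 : t ≤ 1) (hs0 : 0 ≤ s)
    (hr : r^2 = 1 - t^2) (hr0 : 0 ≤ r) (ha : 0 ≤ a) (has : a^2 + s^2 ≤ 1) :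
    (1 - t) * (s - r)^2 ≤ (1 + t) * (a - t)^2 + 2 * (1 - a^2 - s^2) := by
  have ha1 : a ≤ 1 := by nlinarith [sq_nonneg s]
  set M := Real.sqrt (1 - a^2) with hMdef
  have hM0 : 0 ≤ M := Real.sqrt_nonneg _
  have hM : M^2 = 1 - a^2 := Real.sq_sqrt (by nlinarith [sq_nonneg s])
  have hsM : s ≤ M := aux_le hs0 hM0 (by nlinarith)
  have hC : 0 ≤ (1-a)*((1-t)*a+1+t+2*t^2) :=
    mul_nonneg (by linarith) (by nlinarith [mul_nonneg (sub_nonneg.mpr ht1) ha])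
  have hE := E_lem t a M r ht0 ht1 ha ha1 hM hM0 hr hr0
  have hid : (1+t)*(a-t)^2 + 2*(1-a^2-s^2) - (1-t)*(s-r)^2
      = (1-a)*((1-t)*a+1+t+2*t^2) + 2*s*r*(1-t) - (3-t)*s^2 := by
    linear_combination (t-1)*hr
  rcases le_total ((3-t)*s) (2*r*(1-t)) with h | h
  · have := mul_nonneg hs0 (sub_nonneg.mpr h)
    nlinarith [hid, hC, this]
  · have h3 : (0:ℝ) < 3 - t := by linarith
    have hE3 := mul_le_mul_of_nonneg_left hE h3.le
    have hu0 : 0 ≤ (3-t)*s - r*(1-t) := by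
      nlinarith [mul_nonneg hr0 (sub_nonneg.mpr ht1)]
    have huU : (3-t)*s - r*(1-t) ≤ (3-t)*M - r*(1-t) := by nlinarith
    have hu2 : ((3-t)*s - r*(1-t))^2 ≤ ((3-t)*M - r*(1-t))^2 := by
      exact pow_le_pow_left₀ hu0 huU 2
    have hX : 0 ≤ (3-t)*((1-a)*((1-t)*a+1+t+2*t^2) + 2*s*r*(1-t) - (3-t)*s^2) := by
      nlinarith [hu2, hE3]
    have := (mul_nonneg_iff_of_pos_left h3).mp hX
    linarith [hid, this]

lemma key_poly (t s a d r c : ℝ) (ht0 : 0 ≤ t) (ht1 : t ≤ 1) (hs0 : 0 ≤ s)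
    (hr : r^2 = 1 - t^2) (hr0 : 0 ≤ r) (ha : 0 ≤ a)
    (hd1 : a - t ≤ d) (hd2 : t - a ≤ d) (hd0 : 0 ≤ d)
    (hc : c^2 = 1 - a^2 - s^2) (hc0 : 0 ≤ c) :
    (1 - t) * (d^2 + (s - r)^2) ≤ 2 * (d + c)^2 := by
  have has : a^2 + s^2 ≤ 1 := by nlinarith [sq_nonneg c]
  have hR := R_poly t s a r ht0 ht1 hs0 hr hr0 ha has
  have hdsq : (a-t)^2 ≤ d^2 := by nlinarith
  have h1 := mul_le_mul_of_nonneg_left hdsq (by linarith : (0:ℝ) ≤ 1 + t)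
  nlinarith [mul_nonneg hd0 hc0, h1, hR, hc]


open Matrix

lemma pyth {n : ℕ} (u v : EuclideanSpace ℝ (Fin n)) (h : inner ℝ u v = (0:ℝ)) :
    ‖u + v‖^2 = ‖u‖^2 + ‖v‖^2 := by
  rw [norm_add_sq_real, h]; ring

lemma perp_inner {n : ℕ} {V : Submodule ℝ (EuclideanSpace ℝ (Fin n))}
    {u v : EuclideanSpace ℝ (Fin n)} (hu : u ∈ Vᗮ) (hv : v ∈ V) :
    inner ℝ u v = (0:ℝ) := by
  rw [real_inner_comm]
  exact (Submodule.mem_orthogonal V u).mp hu v hv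

set_option maxHeartbeats 1600000 in
/-- In the hard case 2 (ii) geometry, every `y ∈ S₀` satisfies
`‖y − x̄‖ = √(1 − ‖x̄‖²)`, and with `sin γ = (1 − ‖x̄‖)/√((1 − ‖x̄‖)² + 1 − ‖x̄‖²) ∈ (0,1)`,
`dist(x, S₁) + √(1 − ‖x‖²) ≥ dist(x, S₀)·sin γ` for all `x` in the unit ball. -/
theorem trs_hard_case_distance_inequality
    (n : ℕ) (V : Submodule ℝ (EuclideanSpace ℝ (Fin n))) (hV : V ≠ ⊥)
    (xb : EuclideanSpace ℝ (Fin n)) (hxb : xb ∈ Vᗮ) (hxbn : ‖xb‖ < 1)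
    (S0 S1 : Set (EuclideanSpace ℝ (Fin n)))
    (hS0 : S0 = {y | (∃ v ∈ V, y = xb + v) ∧ ‖y‖ = 1})
    (hS1 : S1 = {y | (∃ v ∈ V, y = xb + v) ∧ ‖y‖ ≤ 1})
    (sg : ℝ)
    (hsg : sg = (1 - ‖xb‖) / Real.sqrt ((1 - ‖xb‖) ^ 2 + 1 - ‖xb‖ ^ 2)) :
    (∀ y ∈ S0, ‖y - xb‖ = Real.sqrt (1 - ‖xb‖ ^ 2)) ∧
    (0 < sg ∧ sg < 1) ∧
    (∀ x : EuclideanSpace ℝ (Fin n), ‖x‖ ≤ 1 →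
      Metric.infDist x S0 * sg ≤ Metric.infDist x S1 + Real.sqrt (1 - ‖x‖ ^ 2)) := by
  have ht0 : (0:ℝ) ≤ ‖xb‖ := norm_nonneg xb
  have h1t : (0:ℝ) < 1 - ‖xb‖ := by linarith
  have hr2pos : (0:ℝ) < 1 - ‖xb‖^2 := by nlinarith
  -- Part 1
  have part1 : ∀ y ∈ S0, ‖y - xb‖ = Real.sqrt (1 - ‖xb‖ ^ 2) := by
    intro y hy
    rw [hS0] at hy
    obtain ⟨⟨v, hv, rfl⟩, hn⟩ := hy
    have hiv : inner ℝ xb v = (0:ℝ) := perp_inner hxb hv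
    have hpy : ‖xb + v‖^2 = ‖xb‖^2 + ‖v‖^2 := pyth xb v hiv
    have hv2 : ‖v‖^2 = 1 - ‖xb‖^2 := by rw [hn] at hpy; norm_num at hpy; linarith
    have : xb + v - xb = v := by abel
    rw [this, ← hv2, Real.sqrt_sq (norm_nonneg v)]
  -- Part 2
  have hdenpos : (0:ℝ) < (1 - ‖xb‖)^2 + 1 - ‖xb‖^2 := by nlinarith
  have hsqrtpos : 0 < Real.sqrt ((1 - ‖xb‖)^2 + 1 - ‖xb‖^2) := Real.sqrt_pos.mpr hdenpos
  have sg_pos : 0 < sg := by rw [hsg]; exact div_pos h1t hsqrtpos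
  have sg_lt1 : sg < 1 := by
    rw [hsg, div_lt_one hsqrtpos]
    have : (1 - ‖xb‖)^2 < (1 - ‖xb‖)^2 + 1 - ‖xb‖^2 := by nlinarith
    calc (1 - ‖xb‖) = Real.sqrt ((1 - ‖xb‖)^2) := (Real.sqrt_sq h1t.le).symm
    _ < Real.sqrt ((1 - ‖xb‖)^2 + 1 - ‖xb‖^2) := by
        exact Real.sqrt_lt_sqrt (sq_nonneg _) this
  have hsg2 : sg^2 = (1 - ‖xb‖)/2 := by
    rw [hsg, div_pow, Real.sq_sqrt hdenpos.le,
      show (1 - ‖xb‖)^2 + 1 - ‖xb‖^2 = 2*(1 - ‖xb‖) by ring]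
    field_simp
  refine ⟨part1, ⟨sg_pos, sg_lt1⟩, ?_⟩
  -- Part 3
  intro x hx
  set r := Real.sqrt (1 - ‖xb‖^2) with hrdef
  have hr0 : 0 ≤ r := Real.sqrt_nonneg _
  have hr2 : r^2 = 1 - ‖xb‖^2 := Real.sq_sqrt hr2pos.le
  set c := Real.sqrt (1 - ‖x‖^2) with hcdef
  have hc0 : 0 ≤ c := Real.sqrt_nonneg _
  have hx2 : ‖x‖^2 ≤ 1 := by
    calc ‖x‖^2 ≤ 1^2 := pow_le_pow_left₀ (norm_nonneg x) hx 2
    _ = 1 := one_pow 2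
  have hc2 : c^2 = 1 - ‖x‖^2 := Real.sq_sqrt (by linarith)
  set w := ((V.orthogonalProjectionOnto x : V) : EuclideanSpace ℝ (Fin n)) with hwdef
  have hwV : w ∈ V := SetLike.coe_mem _
  have hxwperp : x - w ∈ Vᗮ := by exact Submodule.sub_starProjection_mem_orthogonal (K := V) x
  have hpx : ‖x‖^2 = ‖x - w‖^2 + ‖w‖^2 := by
    conv_lhs => rw [show x = (x - w) + w by abel]
    exact pyth _ _ (perp_inner hxwperp hwV)
  have hxc : c^2 = 1 - ‖x - w‖^2 - ‖w‖^2 := by rw [hc2, hpx]; ring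
  have habs := abs_norm_sub_norm_le (x - w) xb
  rw [abs_le] at habs
  -- construct the point v1
  obtain ⟨v1, hv1V, hv1r, hv1w⟩ :
      ∃ v1 ∈ V, ‖v1‖ = r ∧ ‖w - v1‖^2 = (‖w‖ - r)^2 := by
    by_cases hw0 : w = 0
    · obtain ⟨v0, hv0V, hv0⟩ := (Submodule.ne_bot_iff V).mp hV
      have hv0n : ‖v0‖ ≠ 0 := norm_ne_zero_iff.mpr hv0
      have hn : ‖(r/‖v0‖) • v0‖ = r := by
        rw [norm_smul, Real.norm_eq_abs, abs_of_nonneg (by positivity)]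
        field_simp
      refine ⟨(r/‖v0‖) • v0, V.smul_mem _ hv0V, hn, ?_⟩
      rw [hw0, zero_sub, norm_neg, norm_zero, hn]
      ring
    · have hwn : ‖w‖ ≠ 0 := norm_ne_zero_iff.mpr hw0
      refine ⟨(r/‖w‖) • w, V.smul_mem _ hwV, ?_, ?_⟩
      · rw [norm_smul, Real.norm_eq_abs, abs_of_nonneg (by positivity)]
        field_simp
      · have : w - (r/‖w‖) • w = (1 - r/‖w‖) • w := by
          rw [sub_smul, one_smul]
        rw [this, norm_smul, Real.norm_eq_abs, mul_pow, sq_abs]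
        field_simp
  have hiv1 : inner ℝ xb v1 = (0:ℝ) := perp_inner hxb hv1V
  have hy2 : ‖xb + v1‖^2 = 1 := by
    rw [pyth xb v1 hiv1, hv1r, hr2]; ring
  have hy1 : ‖xb + v1‖ = 1 := by
    rw [← Real.sqrt_sq (norm_nonneg (xb + v1)), hy2, Real.sqrt_one]
  have hyS0 : (xb + v1) ∈ S0 := by rw [hS0]; exact ⟨⟨v1, hv1V, rfl⟩, hy1⟩
  have hyS1 : (xb + v1) ∈ S1 := by rw [hS1]; exact ⟨⟨v1, hv1V, rfl⟩, hy1.le⟩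
  have hS1ne : S1.Nonempty := ⟨_, hyS1⟩
  have hupper : Metric.infDist x S0 ≤ ‖x - (xb + v1)‖ := by
    rw [← dist_eq_norm]
    exact Metric.infDist_le_dist_of_mem hyS0
  have hperp2 : x - w - xb ∈ Vᗮ := Submodule.sub_mem _ hxwperp hxb
  have hXval : ‖x - (xb + v1)‖^2 = ‖x - w - xb‖^2 + (‖w‖ - r)^2 := by
    rw [show x - (xb + v1) = (x - w - xb) + (w - v1) by abel,
      pyth _ _ (perp_inner hperp2 (Submodule.sub_mem _ hwV hv1V)), hv1w]
  have hlower : ‖x - w - xb‖ ≤ Metric.infDist x S1 := by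
    by_contra hcon
    push_neg at hcon
    obtain ⟨z, hz, hdz⟩ := (Metric.infDist_lt_iff hS1ne).mp hcon
    rw [hS1] at hz
    obtain ⟨⟨v, hv, rfl⟩, -⟩ := hz
    have hsplit : x - (xb + v) = (x - w - xb) + (w - v) := by abel
    have hn2 : ‖x - (xb + v)‖^2 = ‖x - w - xb‖^2 + ‖w - v‖^2 := by
      rw [hsplit]
      exact pyth _ _ (perp_inner hperp2 (Submodule.sub_mem _ hwV hv))
    have : ‖x - w - xb‖ ≤ ‖x - (xb + v)‖ :=
      aux_le (norm_nonneg _) (norm_nonneg _) (by linarith [hn2, sq_nonneg ‖w - v‖])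
    rw [dist_eq_norm] at hdz
    linarith
  have hkey := key_poly ‖xb‖ ‖w‖ ‖x - w‖ ‖x - w - xb‖ r c ht0 hxbn.le
    (norm_nonneg w) hr2 hr0 (norm_nonneg _) habs.2 (by linarith [habs.1])
    (norm_nonneg _) hxc hc0
  have hsgX : sg * ‖x - (xb + v1)‖ ≤ ‖x - w - xb‖ + c := by
    refine aux_le (mul_nonneg sg_pos.le (norm_nonneg _))
      (add_nonneg (norm_nonneg _) hc0) ?_
    have : (sg * ‖x - (xb + v1)‖)^2 = sg^2 * ‖x - (xb + v1)‖^2 := by ring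
    rw [this, hsg2, hXval]
    linarith [hkey]
  calc Metric.infDist x S0 * sg ≤ ‖x - (xb + v1)‖ * sg :=
        mul_le_mul_of_nonneg_right hupper sg_pos.le
    _ = sg * ‖x - (xb + v1)‖ := by ring
    _ ≤ ‖x - w - xb‖ + c := hsgX
    _ ≤ Metric.infDist x S1 + c := by linarith
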